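/- Let V be an n-dimensional real vector space, L ⊆ V ⊕ V* maximal isotropic, and W ⊆ V a subspace of dimension k. Then the image L_W of L ∩ (W ⊕ V*) in W ⊕ W* (via (X,α) ↦ (X, α|_W)) is a maximal isotropic subspace of W ⊕ W*, i.e., dim L_W = k. -/

import Mathlib

open Module

noncomputable section

variable {V : Type*} [AddCommGroup V] [Module ℝ V] [FiniteDimensional ℝ V]

/-- The canonical pairing on `V ⊕ V*`. -/
def pairing {W : Type*} [AddCommGroup W] [Module ℝ W]
    (p q : W × Module.Dual ℝ W) : ℝ := (1/2) * (p.2 q.1 + q.2 p.1)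

/-- A subspace of `V ⊕ V*` is isotropic if the canonical pairing vanishes on it. -/
def IsIsotropic {W : Type*} [AddCommGroup W] [Module ℝ W]
    (L : Submodule ℝ (W × Module.Dual ℝ W)) : Prop :=
  ∀ p ∈ L, ∀ q ∈ L, pairing p q = 0

/-- The canonical pairing as a bilinear form. -/
def pform (U : Type*) [AddCommGroup U] [Module ℝ U] :
    LinearMap.BilinForm ℝ (U × Module.Dual ℝ U) :=
  LinearMap.mk₂ ℝ (fun p q => (1/2 : ℝ) * (p.2 q.1 + q.2 p.1))
    (by intro p p' q; simp; ring)
    (by intro a p q; simp; ring)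
    (by intro p q q'; simp; ring)
    (by intro a p q; simp; ring)

lemma pform_apply {U : Type*} [AddCommGroup U] [Module ℝ U]
    (p q : U × Module.Dual ℝ U) : pform U p q = (1/2 : ℝ) * (p.2 q.1 + q.2 p.1) := rfl

lemma pform_symm (U : Type*) [AddCommGroup U] [Module ℝ U] : (pform U).IsSymm := by
  rw [LinearMap.BilinForm.isSymm_def]
  intro p q; simp [pform_apply]; ring

lemma pform_nondegenerate (U : Type*) [AddCommGroup U] [Module ℝ U] :
    (pform U).Nondegenerate := by
  have hsep : ∀ p : U × Module.Dual ℝ U, (∀ n, pform U p n = 0) → p = 0 := by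
    intro p hp
    have h1 : p.2 = 0 := by
      ext y
      have := hp (y, 0)
      simp [pform_apply] at this
      simpa using this
    have h2 : p.1 = 0 := by
      rw [← Module.forall_dual_apply_eq_zero_iff ℝ p.1]
      intro φ
      have := hp (0, φ)
      simp [pform_apply] at this
      simpa using this
    exact Prod.ext h2 h1
  exact ⟨hsep, fun p hp => hsep p (fun n => by
    rw [LinearMap.BilinForm.isSymm_def.mp (pform_symm U) p n]; exact hp n)⟩

/-- Restriction map to `W ⊕ W*`. -/
def resMap {V : Type*} [AddCommGroup V] [Module ℝ V] (W : Submodule ℝ V)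
    (M : Submodule ℝ (V × Module.Dual ℝ V)) (hM : M ≤ W.prod ⊤) :
    ↥M →ₗ[ℝ] ↥W × Module.Dual ℝ ↥W where
  toFun p := (⟨(p : V × Module.Dual ℝ V).1, (hM p.2).1⟩,
    (p : V × Module.Dual ℝ V).2 ∘ₗ W.subtype)
  map_add' a b := by ext <;> rfl
  map_smul' c a := by ext <;> rfl

set_option maxHeartbeats 1600000 in
set_option synthInstance.maxHeartbeats 1000000 in
theorem stmt9 (L : Submodule ℝ (V × Module.Dual ℝ V))
    (hL : IsIsotropic L) (hdim : finrank ℝ L = finrank ℝ V) (W : Submodule ℝ V) :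
    ∃ LW : Submodule ℝ (↥W × Module.Dual ℝ ↥W),
      (↑LW = {q : ↥W × Module.Dual ℝ ↥W |
        ∃ (X : V) (α : Module.Dual ℝ V), (X, α) ∈ L ∧ X = (q.1 : V) ∧
          ∀ w : W, α w = q.2 w}) ∧
      finrank ℝ LW = finrank ℝ W := by
  classical
  have hrefl : (pform V).IsRefl := (pform_symm V).isRefl
  have hnd : (pform V).Nondegenerate := pform_nondegenerate V
  have hMle : L ⊓ W.prod ⊤ ≤ W.prod ⊤ := inf_le_right
  let f := resMap W (L ⊓ W.prod ⊤) hMle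
  refine ⟨LinearMap.range f, ?_, ?_⟩
  · ext q
    simp only [SetLike.mem_coe, LinearMap.mem_range, Set.mem_setOf_eq]
    constructor
    · rintro ⟨p, rfl⟩
      exact ⟨(p : V × Module.Dual ℝ V).1, (p : V × Module.Dual ℝ V).2, p.2.1, rfl,
        fun w => rfl⟩
    · rintro ⟨X, α, hXα, hX, hα⟩
      refine ⟨⟨(X, α), hXα, ⟨by simpa [hX] using q.1.2, trivial⟩⟩, ?_⟩
      refine Prod.ext (Subtype.ext hX) ?_
      ext w
      exact hα w
  · -- dimension count
    have dim2 : finrank ℝ (V × Module.Dual ℝ V) = finrank ℝ V + finrank ℝ V := by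
      rw [Module.finrank_prod, Subspace.dual_finrank_eq]
    -- L is its own orthogonal
    have hLle : L ≤ (pform V).orthogonal L := fun p hp q hq => hL q hq p hp
    have hLorth : (pform V).orthogonal L = L := by
      refine (Submodule.eq_of_le_of_finrank_le hLle ?_).symm
      rw [LinearMap.BilinForm.finrank_orthogonal hnd, dim2, hdim]
      omega
    -- orthogonal of the annihilator part is W ⊕ V*
    have hSorth : (pform V).orthogonal ((⊥ : Submodule ℝ V).prod W.dualAnnihilator)
        = W.prod ⊤ := by
      ext p
      simp only [LinearMap.BilinForm.mem_orthogonal_iff]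
      constructor
      · intro h
        refine ⟨?_, trivial⟩
        have hmem : p.1 ∈ W.dualAnnihilator.dualCoannihilator := by
          rw [Submodule.mem_dualCoannihilator]
          intro β hβ
          have h0 := h (0, β) ⟨Submodule.zero_mem _, hβ⟩
          have h0' : (1/2 : ℝ) * (β p.1 + p.2 0) = 0 := h0
          rw [map_zero] at h0'
          linarith
        rwa [Subspace.dualAnnihilator_dualCoannihilator_eq] at hmem
      · rintro ⟨hp1, -⟩ q hq
        have hq1 : q.1 = 0 := (Submodule.mem_bot ℝ).mp hq.1
        have hq2 : q.2 ∈ W.dualAnnihilator := hq.2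
        rw [Submodule.mem_dualAnnihilator] at hq2
        show (1/2 : ℝ) * (q.2 p.1 + p.2 q.1) = 0
        rw [hq1, map_zero, hq2 p.1 hp1]
        ring
    -- orthogonal of the sup
    have horthsup : (pform V).orthogonal
          (L ⊔ (⊥ : Submodule ℝ V).prod W.dualAnnihilator) =
        (pform V).orthogonal L ⊓
          (pform V).orthogonal ((⊥ : Submodule ℝ V).prod W.dualAnnihilator) := by
      ext p
      simp only [Submodule.mem_inf, LinearMap.BilinForm.mem_orthogonal_iff]
      constructor
      · intro h
        exact ⟨fun q hq => h q (Submodule.mem_sup_left hq),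
          fun q hq => h q (Submodule.mem_sup_right hq)⟩
      · rintro ⟨h1, h2⟩ q hq
        rw [Submodule.mem_sup] at hq
        obtain ⟨y, hy, z, hz, rfl⟩ := hq
        have := h1 y hy
        have := h2 z hz
        rw [map_add, LinearMap.add_apply]
        simp_all
    have hMorth : L ⊓ W.prod ⊤ =
        (pform V).orthogonal (L ⊔ (⊥ : Submodule ℝ V).prod W.dualAnnihilator) := by
      rw [horthsup, hLorth, hSorth]
    have hMperp : (pform V).orthogonal (L ⊓ W.prod ⊤) =
        L ⊔ (⊥ : Submodule ℝ V).prod W.dualAnnihilator := by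
      rw [hMorth, LinearMap.BilinForm.orthogonal_orthogonal hnd hrefl]
    -- the image is isotropic
    have hreflW : (pform ↥W).IsRefl := (pform_symm ↥W).isRefl
    have hndW : (pform ↥W).Nondegenerate := pform_nondegenerate ↥W
    have hiso : LinearMap.range f ≤ (pform ↥W).orthogonal (LinearMap.range f) := by
      rintro p ⟨a, rfl⟩ n hn
      obtain ⟨b, rfl⟩ := hn
      show (1/2 : ℝ) * ((b : V × Module.Dual ℝ V).2 (a : V × Module.Dual ℝ V).1 +
        (a : V × Module.Dual ℝ V).2 (b : V × Module.Dual ℝ V).1) = 0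
      exact hL _ b.2.1 _ a.2.1
    -- the image is coisotropic
    have hco : (pform ↥W).orthogonal (LinearMap.range f) ≤ LinearMap.range f := by
      intro q hq
      rw [LinearMap.BilinForm.mem_orthogonal_iff] at hq
      obtain ⟨β, hβ⟩ := LinearMap.dualMap_surjective_of_injective
        (Submodule.injective_subtype W) q.2
      have hmem : ((q.1 : V), β) ∈
          L ⊔ (⊥ : Submodule ℝ V).prod W.dualAnnihilator := by
        rw [← hMperp, LinearMap.BilinForm.mem_orthogonal_iff]
        intro r hr
        have h0 := hq (f ⟨r, hr⟩) ⟨⟨r, hr⟩, rfl⟩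
        have e2 : β r.1 = q.2 ⟨r.1, hr.2.1⟩ := by rw [← hβ]; rfl
        show (1/2 : ℝ) * (r.2 (q.1 : V) + β r.1) = 0
        rw [e2]
        exact h0
      rw [Submodule.mem_sup] at hmem
      obtain ⟨y, hy, z, hz, hsum⟩ := hmem
      have h1 : y.1 + z.1 = (q.1 : V) := congrArg Prod.fst hsum
      have h2 : y.2 + z.2 = β := congrArg Prod.snd hsum
      have z1 : z.1 = 0 := (Submodule.mem_bot ℝ).mp hz.1
      have zann : z.2 ∈ W.dualAnnihilator := hz.2
      rw [Submodule.mem_dualAnnihilator] at zann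
      have hy1 : y.1 = (q.1 : V) := by rw [← h1, z1, add_zero]
      have hyW : y.1 ∈ W := by rw [hy1]; exact q.1.2
      refine ⟨⟨y, hy, hyW, trivial⟩, ?_⟩
      refine Prod.ext (Subtype.ext hy1) ?_
      ext w
      show y.2 w = q.2 w
      have hβw : β (w : V) = q.2 w := by rw [← hβ]; rfl
      have : y.2 w + z.2 w = β (w : V) := by
        rw [← h2]; rfl
      rw [zann w w.2, add_zero] at this
      rw [this, hβw]
    have heq : (pform ↥W).orthogonal (LinearMap.range f) = LinearMap.range f :=
      le_antisymm hco hiso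
    have h2 := LinearMap.BilinForm.finrank_add_finrank_orthogonal hreflW
      (W := LinearMap.range f)
    rw [heq, LinearMap.BilinForm.orthogonal_top_eq_bot hndW, inf_bot_eq] at h2
    have hb : finrank ℝ (⊥ : Submodule ℝ (↥W × Module.Dual ℝ ↥W)) = 0 := finrank_bot ℝ _
    have dimWW : finrank ℝ (↥W × Module.Dual ℝ ↥W) = finrank ℝ W + finrank ℝ W := by
      rw [Module.finrank_prod, Subspace.dual_finrank_eq]
    omega

end
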